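/- Let X = C_1 ∪ ... ∪ C_N be a tree-like curve with a fixed ordering of components as in Teixidor's lemma, H a polarization of degree h, and write d − g = ht + b with 0 ≤ b < h. If L is a stable line bundle on X of degree d, then for every i ≤ N−1 the number k_{X_i} = h_{X_i}(b+1)/h is not an integer, and the degree of L restricted to the subcurve X_i equals d_{X_i} = −χ(O_{X_i}) + h_{X_i}·t + [k_{X_i}] + 1, where [·] denotes the floor function. -/
import Mathlib


/-- Let `X = C₁ ∪ ... ∪ C_N` be a tree-like curve with components ordered per Teixidor's lemma,
with subcurves `X_i` (`i ≤ N−1`) meeting their complements in one node (`α_{X_i} = 1`), `H` a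
polarization of degree `h`, and `d − g = ht + b`, `0 ≤ b < h`.  If `L` is a stable line bundle
of degree `d` — so by the general stability criterion, for every `i`,
`−χ(O_{X_i}) + h_{X_i}t + k_{X_i} < d_{X_i} < −χ(O_{X_i}) + h_{X_i}t + k_{X_i} + 1` with
`k_{X_i} = h_{X_i}(b+1)/h` and `d_{X_i} = deg(L|_{X_i}) ∈ ℤ` — then for every `i ≤ N−1`,
`k_{X_i}` is not an integer and `d_{X_i} = −χ(O_{X_i}) + h_{X_i}t + ⌊k_{X_i}⌋ + 1`. -/
theorem tree_like_stable_degrees (N : ℕ) (h : ℤ) (hp : 0 < h)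
    (g d t b : ℤ) (hb0 : 0 ≤ b) (hbh : b < h) (hdg : d - g = h * t + b)
    (hX χX dX : Fin (N - 1) → ℤ)
    (hXpos : ∀ i, 0 < hX i) (hXlt : ∀ i, hX i < h)
    (k : Fin (N - 1) → ℚ) (hk : ∀ i, k i = (hX i : ℚ) * (b + 1) / (h : ℚ))
    (hstable : ∀ i, (-(χX i : ℚ) + (hX i : ℚ) * t + k i < (dX i : ℚ)) ∧
      ((dX i : ℚ) < -(χX i : ℚ) + (hX i : ℚ) * t + k i + 1)) :
    ∀ i, (¬ ∃ z : ℤ, k i = (z : ℚ)) ∧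
      (dX i : ℚ) = -(χX i : ℚ) + (hX i : ℚ) * t + (⌊k i⌋ : ℚ) + 1 := by
  intro i
  obtain ⟨h1, h2⟩ := hstable i
  set m : ℤ := dX i + χX i - hX i * t with hm
  have hm1 : k i < (m : ℚ) := by push_cast [hm]; linarith
  have hm2 : (m : ℚ) < k i + 1 := by push_cast [hm]; linarith
  have hfloor : ⌊k i⌋ = m - 1 := by
    rw [Int.floor_eq_iff]
    constructor
    · push_cast; linarith
    · push_cast; linarith
  constructor
  · rintro ⟨z, hz⟩
    rw [hz] at hm1 hm2
    have : z < m := by exact_mod_cast hm1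
    have : m < z + 1 := by exact_mod_cast (by push_cast at hm2 ⊢; linarith : (m : ℚ) < (z : ℚ) + 1)
    omega
  · rw [hfloor]; push_cast [hm]; ring
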